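/- Let k be an algebraically closed field, s > 2, m ≥ 0, F = k⟨x₁,…,x_m,y₁,y₂⟩ the free associative k-algebra, and L the k-span of its generators. Let f, f' ∈ L^{s−1} be homogeneous of degree s−1 and g ∈ L homogeneous of degree 1. If y₁·f' and f'·y₂ are linearly independent, then span{g·f, f·g} ≠ span{y₁·f', f'·y₂}. -/

import Mathlib

noncomputable section

/-- The span `L` of the generators of the free algebra `k⟨X⟩`
(the degree-one homogeneous component). -/
def faGens (k X : Type) [Field k] : Submodule k (FreeAlgebra k X) :=
  Submodule.span k (Set.range (FreeAlgebra.ι k : X → FreeAlgebra k X))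

/-! ### Auxiliary list lemmas -/

section ListLemmas

variable {α : Type*} [LinearOrder α]

theorem lexAppendLt : ∀ {l₁ l₂ : List α}, List.Lex (· < ·) l₁ l₂ → l₁.length = l₂.length →
    ∀ t₁ t₂ : List α, List.Lex (· < ·) (l₁ ++ t₁) (l₂ ++ t₂) := by
  intro l₁ l₂ h
  induction h with
  | nil => intro hlen; simp at hlen
  | rel h => intro _ t₁ t₂; exact List.Lex.rel h
  | cons h ih => intro hlen t₁ t₂; exact List.Lex.cons (ih (by simpa using hlen) t₁ t₂)

theorem listLt_iff {l₁ l₂ : List α} : l₁ < l₂ ↔ List.Lex (· < ·) l₁ l₂ := Iff.rfl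

theorem lexAppendLeLeft (l : List α) {t₁ t₂ : List α} (h : t₁ ≤ t₂) : l ++ t₁ ≤ l ++ t₂ := by
  rcases eq_or_lt_of_le h with rfl | h
  · exact le_rfl
  · exact le_of_lt (listLt_iff.2 (List.Lex.append_left _ (listLt_iff.1 h) l))

theorem lexAppendLe {l₁ l₂ t₁ t₂ : List α} (hlen : l₁.length = l₂.length)
    (h : l₁ ≤ l₂) (h' : t₁ ≤ t₂) : l₁ ++ t₁ ≤ l₂ ++ t₂ := by
  rcases eq_or_lt_of_le h with rfl | h
  · exact lexAppendLeLeft _ h'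
  · exact le_of_lt (listLt_iff.2 (lexAppendLt (listLt_iff.1 h) hlen t₁ t₂))

theorem chainEq : ∀ (W : List α) {p q a b : α}, W ++ [a, b] = p :: q :: W →
    (a = p ∧ b = q) ∨ (a = q ∧ b = p) := by
  intro W
  induction W with
  | nil => intro p q a b h; simp at h; tauto
  | cons c W ih =>
    intro p q a b h
    simp only [List.cons_append, List.cons.injEq] at h
    obtain ⟨rfl, h⟩ := h
    rcases ih h with ⟨rfl, rfl⟩ | ⟨rfl, rfl⟩
    · tauto
    · tauto

omit [LinearOrder α] in
theorem rotEq : ∀ (W : List α) {p a : α}, W ++ [a] = p :: W → a = p := by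
  intro W
  induction W with
  | nil => intro p a h; simpa using h
  | cons c W ih =>
    intro p a h
    simp only [List.cons_append, List.cons.injEq] at h
    obtain ⟨rfl, h⟩ := h
    exact ih h

omit [LinearOrder α] in
theorem selfRot : ∀ (l : List α) (a : α), a :: l = l ++ [a] → l = List.replicate l.length a := by
  intro l
  induction l with
  | nil => intro a _; rfl
  | cons c l ih =>
    intro a h
    simp only [List.cons_append, List.cons.injEq] at h
    obtain ⟨rfl, h⟩ := h
    have := ih a h
    simp [List.replicate_succ, ← this]

end ListLemmas

/-! ### Order on `FreeMonoid` and leading/trailing words in `MonoidAlgebra` -/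

instance freeMonoidLO {α : Type*} [LinearOrder α] : LinearOrder (FreeMonoid α) :=
  LinearOrder.lift' FreeMonoid.toList FreeMonoid.toList.injective

instance maCoeFun {k M : Type*} [Semiring k] : CoeFun (MonoidAlgebra k M) (fun _ => M → k) :=
  ⟨fun P => P.coeff⟩

section MA

variable {k : Type} [Field k] {α : Type*} [LinearOrder α]

theorem fmLe_iff {a b : FreeMonoid α} :
    a ≤ b ↔ FreeMonoid.toList a ≤ FreeMonoid.toList b := Iff.rfl

/-- homogeneous of degree `n` : all words in the support have length `n`. -/
def IsHom (P : MonoidAlgebra k (FreeMonoid α)) (n : ℕ) : Prop :=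
  ∀ w ∈ P.coeff.support, (FreeMonoid.toList w).length = n

theorem coeff_mul_hom {P Q : MonoidAlgebra k (FreeMonoid α)} {n₁ n₂ : ℕ}
    (hP : IsHom P n₁) (hQ : IsHom Q n₂) (a b : FreeMonoid α)
    (ha : (FreeMonoid.toList a).length = n₁) (hb : (FreeMonoid.toList b).length = n₂) :
    (P * Q) (a * b) = P a * Q b := by
  classical
  have key : ∀ a₁ a₂ : FreeMonoid α, a₁ ∈ P.coeff.support → a₂ ∈ Q.coeff.support →
      a₁ * a₂ = a * b → a₁ = a ∧ a₂ = b := by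
    intro a₁ a₂ h₁ h₂ hmul
    have hl : (FreeMonoid.toList a₁).length = (FreeMonoid.toList a).length := by
      rw [hP a₁ h₁, ha]
    have : FreeMonoid.toList a₁ ++ FreeMonoid.toList a₂
        = FreeMonoid.toList a ++ FreeMonoid.toList b := by
      rw [← FreeMonoid.toList_mul, ← FreeMonoid.toList_mul, hmul]
    obtain ⟨h1, h2⟩ := List.append_inj this hl
    exact ⟨FreeMonoid.toList.injective h1, FreeMonoid.toList.injective h2⟩
  rw [MonoidAlgebra.coeff_mul]
  rw [Finsupp.sum]
  rw [Finset.sum_eq_single a]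
  · rw [Finsupp.sum]
    rw [Finset.sum_eq_single b]
    · simp
    · intro c hc hcb
      show (if a * c = a * b then P a * Q c else 0) = 0
      rw [if_neg]
      intro hh
      exact hcb (mul_left_cancel hh)
    · intro hb'
      simp [Finsupp.notMem_support_iff.1 hb']
  · intro c hc hca
    apply Finset.sum_eq_zero
    intro d hd
    show (if c * d = a * b then P c * Q d else 0) = 0
    rw [if_neg]
    intro hh
    exact hca (key c d hc hd hh).1
  · intro ha'
    simp [Finsupp.notMem_support_iff.1 ha']

theorem isHom_mul {P Q : MonoidAlgebra k (FreeMonoid α)} {n₁ n₂ : ℕ}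
    (hP : IsHom P n₁) (hQ : IsHom Q n₂) : IsHom (P * Q) (n₁ + n₂) := by
  classical
  intro w hw
  have := MonoidAlgebra.support_coeff_mul_subset P Q hw
  rw [Finset.mem_mul] at this
  obtain ⟨a, ha, b, hb, rfl⟩ := this
  rw [FreeMonoid.toList_mul, List.length_append, hP a ha, hQ b hb]

/-- leading word (junk value `1` for `0`). -/
def topw (P : MonoidAlgebra k (FreeMonoid α)) : FreeMonoid α :=
  P.coeff.support.max.unbotD 1

/-- trailing word (junk value `1` for `0`). -/
def botw (P : MonoidAlgebra k (FreeMonoid α)) : FreeMonoid α :=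
  P.coeff.support.min.untopD 1

theorem topw_eq_max' {P : MonoidAlgebra k (FreeMonoid α)} (h : P ≠ 0) :
    topw P = P.coeff.support.max' (Finsupp.support_nonempty_iff.2 (mt MonoidAlgebra.coeff_eq_zero.1 h)) := by
  rw [topw, ← Finset.coe_max' (Finsupp.support_nonempty_iff.2 (mt MonoidAlgebra.coeff_eq_zero.1 h)), WithBot.unbotD_coe]

theorem botw_eq_min' {P : MonoidAlgebra k (FreeMonoid α)} (h : P ≠ 0) :
    botw P = P.coeff.support.min' (Finsupp.support_nonempty_iff.2 (mt MonoidAlgebra.coeff_eq_zero.1 h)) := by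
  rw [botw, ← Finset.coe_min' (Finsupp.support_nonempty_iff.2 (mt MonoidAlgebra.coeff_eq_zero.1 h)), WithTop.untopD_coe]

theorem topw_mem {P : MonoidAlgebra k (FreeMonoid α)} (h : P ≠ 0) : topw P ∈ P.coeff.support := by
  rw [topw_eq_max' h]; exact Finset.max'_mem _ _

theorem botw_mem {P : MonoidAlgebra k (FreeMonoid α)} (h : P ≠ 0) : botw P ∈ P.coeff.support := by
  rw [botw_eq_min' h]; exact Finset.min'_mem _ _

theorem topw_coeff {P : MonoidAlgebra k (FreeMonoid α)} (h : P ≠ 0) : P (topw P) ≠ 0 :=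
  Finsupp.mem_support_iff.1 (topw_mem h)

theorem botw_coeff {P : MonoidAlgebra k (FreeMonoid α)} (h : P ≠ 0) : P (botw P) ≠ 0 :=
  Finsupp.mem_support_iff.1 (botw_mem h)

theorem le_topw {P : MonoidAlgebra k (FreeMonoid α)} {w : FreeMonoid α} (hw : w ∈ P.coeff.support) :
    w ≤ topw P := by
  have h : P ≠ 0 := mt MonoidAlgebra.coeff_eq_zero.2 (Finsupp.support_nonempty_iff.1 ⟨w, hw⟩)
  rw [topw_eq_max' h]; exact Finset.le_max' _ _ hw

theorem botw_le {P : MonoidAlgebra k (FreeMonoid α)} {w : FreeMonoid α} (hw : w ∈ P.coeff.support) :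
    botw P ≤ w := by
  have h : P ≠ 0 := mt MonoidAlgebra.coeff_eq_zero.2 (Finsupp.support_nonempty_iff.1 ⟨w, hw⟩)
  rw [botw_eq_min' h]; exact Finset.min'_le _ _ hw

theorem topw_spec {P : MonoidAlgebra k (FreeMonoid α)} {w : FreeMonoid α} (hw : w ∈ P.coeff.support)
    (hmax : ∀ x ∈ P.coeff.support, x ≤ w) : topw P = w :=
  le_antisymm (hmax _ (topw_mem (mt MonoidAlgebra.coeff_eq_zero.2 (Finsupp.support_nonempty_iff.1 ⟨w, hw⟩)))) (le_topw hw)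

theorem botw_spec {P : MonoidAlgebra k (FreeMonoid α)} {w : FreeMonoid α} (hw : w ∈ P.coeff.support)
    (hmin : ∀ x ∈ P.coeff.support, w ≤ x) : botw P = w :=
  le_antisymm (botw_le hw) (hmin _ (botw_mem (mt MonoidAlgebra.coeff_eq_zero.2 (Finsupp.support_nonempty_iff.1 ⟨w, hw⟩))))

theorem fm_mul_le {a b c d : FreeMonoid α} {n : ℕ}
    (hlen : (FreeMonoid.toList a).length = n) (hlen' : (FreeMonoid.toList c).length = n)
    (h : a ≤ c) (h' : b ≤ d) : a * b ≤ c * d := by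
  rw [fmLe_iff, FreeMonoid.toList_mul, FreeMonoid.toList_mul]
  exact lexAppendLe (by rw [hlen, hlen']) (fmLe_iff.1 h) (fmLe_iff.1 h')

theorem topw_mul {P Q : MonoidAlgebra k (FreeMonoid α)} {n₁ n₂ : ℕ}
    (hP0 : P ≠ 0) (hQ0 : Q ≠ 0) (hP : IsHom P n₁) (hQ : IsHom Q n₂) :
    P * Q ≠ 0 ∧ topw (P * Q) = topw P * topw Q := by
  classical
  have hco : (P * Q) (topw P * topw Q) = P (topw P) * Q (topw Q) :=
    coeff_mul_hom hP hQ _ _ (hP _ (topw_mem hP0)) (hQ _ (topw_mem hQ0))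
  have hne : (P * Q) (topw P * topw Q) ≠ 0 := by
    rw [hco]; exact mul_ne_zero (topw_coeff hP0) (topw_coeff hQ0)
  have hmem : topw P * topw Q ∈ (P * Q).coeff.support := Finsupp.mem_support_iff.2 hne
  refine ⟨mt MonoidAlgebra.coeff_eq_zero.2 (Finsupp.support_nonempty_iff.1 ⟨_, hmem⟩), topw_spec hmem ?_⟩
  intro w hw
  have := MonoidAlgebra.support_coeff_mul_subset P Q hw
  rw [Finset.mem_mul] at this
  obtain ⟨a, ha, b, hb, rfl⟩ := this
  exact fm_mul_le (hP a ha) (hP _ (topw_mem hP0)) (le_topw ha) (le_topw hb)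

theorem botw_mul {P Q : MonoidAlgebra k (FreeMonoid α)} {n₁ n₂ : ℕ}
    (hP0 : P ≠ 0) (hQ0 : Q ≠ 0) (hP : IsHom P n₁) (hQ : IsHom Q n₂) :
    P * Q ≠ 0 ∧ botw (P * Q) = botw P * botw Q := by
  classical
  have hco : (P * Q) (botw P * botw Q) = P (botw P) * Q (botw Q) :=
    coeff_mul_hom hP hQ _ _ (hP _ (botw_mem hP0)) (hQ _ (botw_mem hQ0))
  have hne : (P * Q) (botw P * botw Q) ≠ 0 := by
    rw [hco]; exact mul_ne_zero (botw_coeff hP0) (botw_coeff hQ0)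
  have hmem : botw P * botw Q ∈ (P * Q).coeff.support := Finsupp.mem_support_iff.2 hne
  refine ⟨mt MonoidAlgebra.coeff_eq_zero.2 (Finsupp.support_nonempty_iff.1 ⟨_, hmem⟩), botw_spec hmem ?_⟩
  intro w hw
  have := MonoidAlgebra.support_coeff_mul_subset P Q hw
  rw [Finset.mem_mul] at this
  obtain ⟨a, ha, b, hb, rfl⟩ := this
  exact fm_mul_le (hP _ (botw_mem hP0)) (hP a ha) (botw_le ha) (botw_le hb)

theorem topw_smul {Q : MonoidAlgebra k (FreeMonoid α)} {b : k} (hb : b ≠ 0) :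
    topw (b • Q) = topw Q := by
  rw [topw, topw, MonoidAlgebra.coeff_smul, Finsupp.support_smul_eq hb]

theorem botw_smul {Q : MonoidAlgebra k (FreeMonoid α)} {b : k} (hb : b ≠ 0) :
    botw (b • Q) = botw Q := by
  rw [botw, botw, MonoidAlgebra.coeff_smul, Finsupp.support_smul_eq hb]

theorem combo_support {P Q : MonoidAlgebra k (FreeMonoid α)} {a b : k} {w : FreeMonoid α}
    (hw : w ∈ (a • P + b • Q).coeff.support) : w ∈ P.coeff.support ∪ Q.coeff.support := by
  classical
  have h1 := Finsupp.support_add (g₁ := (a • P).coeff) (g₂ := (b • Q).coeff) hw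
  rcases Finset.mem_union.1 h1 with h | h
  · exact Finset.mem_union_left _ (Finsupp.support_smul (b := a) (g := P.coeff) h)
  · exact Finset.mem_union_right _ (Finsupp.support_smul (b := b) (g := Q.coeff) h)

theorem coeff_eq_zero_of_topw_lt {Q : MonoidAlgebra k (FreeMonoid α)} {w : FreeMonoid α}
    (h : topw Q < w) : Q w = 0 := by
  by_cases hQ : Q = 0
  · simp [hQ]
  · rw [← Finsupp.notMem_support_iff]
    intro hmem
    exact absurd (le_topw hmem) (not_le.2 h)

theorem coeff_eq_zero_of_lt_botw {Q : MonoidAlgebra k (FreeMonoid α)} {w : FreeMonoid α}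
    (h : w < botw Q) : Q w = 0 := by
  by_cases hQ : Q = 0
  · simp [hQ]
  · rw [← Finsupp.notMem_support_iff]
    intro hmem
    exact absurd (botw_le hmem) (not_le.2 h)

theorem topw_combo_aux {P Q : MonoidAlgebra k (FreeMonoid α)} (hP0 : P ≠ 0)
    (hlt : topw Q < topw P) {a b : k} (ha : a ≠ 0) : topw (a • P + b • Q) = topw P := by
  have hco : (a • P + b • Q) (topw P) = a * P (topw P) := by
    rw [MonoidAlgebra.coeff_add, MonoidAlgebra.coeff_smul, MonoidAlgebra.coeff_smul, Finsupp.add_apply, Finsupp.smul_apply, Finsupp.smul_apply,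
      coeff_eq_zero_of_topw_lt hlt]
    simp [smul_eq_mul]
  have hmem : topw P ∈ (a • P + b • Q).coeff.support := by
    rw [Finsupp.mem_support_iff, hco]
    exact mul_ne_zero ha (topw_coeff hP0)
  refine topw_spec hmem ?_
  intro w hw
  rcases Finset.mem_union.1 (combo_support hw) with h | h
  · exact le_topw h
  · exact le_trans (le_topw h) (le_of_lt hlt)

theorem botw_combo_aux {P Q : MonoidAlgebra k (FreeMonoid α)} (hP0 : P ≠ 0)
    (hlt : botw P < botw Q) {a b : k} (ha : a ≠ 0) : botw (a • P + b • Q) = botw P := by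
  have hco : (a • P + b • Q) (botw P) = a * P (botw P) := by
    rw [MonoidAlgebra.coeff_add, MonoidAlgebra.coeff_smul, MonoidAlgebra.coeff_smul, Finsupp.add_apply, Finsupp.smul_apply, Finsupp.smul_apply,
      coeff_eq_zero_of_lt_botw hlt]
    simp [smul_eq_mul]
  have hmem : botw P ∈ (a • P + b • Q).coeff.support := by
    rw [Finsupp.mem_support_iff, hco]
    exact mul_ne_zero ha (botw_coeff hP0)
  refine botw_spec hmem ?_
  intro w hw
  rcases Finset.mem_union.1 (combo_support hw) with h | h
  · exact botw_le h
  · exact le_trans (le_of_lt hlt) (botw_le h)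

theorem topw_combo {P Q : MonoidAlgebra k (FreeMonoid α)} (hP0 : P ≠ 0) (hQ0 : Q ≠ 0)
    (hne : topw P ≠ topw Q) {a b : k} (hv : a • P + b • Q ≠ 0) :
    topw (a • P + b • Q) = topw P ∨ topw (a • P + b • Q) = topw Q := by
  by_cases ha : a = 0
  · subst ha
    have hb : b ≠ 0 := by
      intro hb; subst hb; simp at hv
    right
    rw [zero_smul, zero_add, topw_smul hb]
  · rcases hne.lt_or_gt with h | h
    · by_cases hb : b = 0
      · subst hb
        left
        rw [zero_smul, add_zero, topw_smul ha]
      · right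
        rw [add_comm]
        exact topw_combo_aux hQ0 h hb
    · left
      exact topw_combo_aux hP0 h ha

theorem botw_combo {P Q : MonoidAlgebra k (FreeMonoid α)} (hP0 : P ≠ 0) (hQ0 : Q ≠ 0)
    (hne : botw P ≠ botw Q) {a b : k} (hv : a • P + b • Q ≠ 0) :
    botw (a • P + b • Q) = botw P ∨ botw (a • P + b • Q) = botw Q := by
  by_cases ha : a = 0
  · subst ha
    have hb : b ≠ 0 := by
      intro hb; subst hb; simp at hv
    right
    rw [zero_smul, zero_add, botw_smul hb]
  · rcases hne.lt_or_gt with h | h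
    · left
      exact botw_combo_aux hP0 h ha
    · by_cases hb : b = 0
      · subst hb
        left
        rw [zero_smul, add_zero, botw_smul ha]
      · right
        rw [add_comm]
        exact botw_combo_aux hQ0 h hb

theorem topw_single {w : FreeMonoid α} {c : k} (hc : c ≠ 0) :
    topw (MonoidAlgebra.single w c) = w := by
  rw [topw, MonoidAlgebra.coeff_single, Finsupp.support_single_ne_zero _ hc]
  rfl

theorem botw_single {w : FreeMonoid α} {c : k} (hc : c ≠ 0) :
    botw (MonoidAlgebra.single w c) = w := by
  rw [botw, MonoidAlgebra.coeff_single, Finsupp.support_single_ne_zero _ hc]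
  rfl

theorem isHom_single {w : FreeMonoid α} {c : k} {n : ℕ}
    (hw : (FreeMonoid.toList w).length = n) : IsHom (MonoidAlgebra.single w c) n := by
  intro x hx
  have := Finsupp.support_single_subset hx
  simp only [Finset.mem_singleton] at this
  subst this; exact hw

theorem combo_apply (P Q : MonoidAlgebra k (FreeMonoid α)) (a b : k) (w : FreeMonoid α) :
    (a • P + b • Q) w = a * P w + b * Q w := by
  rw [MonoidAlgebra.coeff_add, MonoidAlgebra.coeff_smul, MonoidAlgebra.coeff_smul, Finsupp.add_apply, Finsupp.smul_apply, Finsupp.smul_apply, smul_eq_mul, smul_eq_mul]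

end MA



/-! ### Homogeneity of elements of powers of the generator span -/

section Hom

variable {k : Type} [Field k] {α : Type} [LinearOrder α]

local notation "E" => (FreeAlgebra.equivMonoidAlgebraFreeMonoid :
    FreeAlgebra k α ≃ₐ[k] MonoidAlgebra k (FreeMonoid α))

theorem E_iota (x : α) :
    (FreeAlgebra.equivMonoidAlgebraFreeMonoid (FreeAlgebra.ι k x) :
      MonoidAlgebra k (FreeMonoid α)) = MonoidAlgebra.single (FreeMonoid.of x) 1 := by
  simp [FreeAlgebra.equivMonoidAlgebraFreeMonoid]

theorem isHom_gens {p : FreeAlgebra k α}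
    (hp : p ∈ Submodule.span k (Set.range (FreeAlgebra.ι k : α → FreeAlgebra k α))) :
    IsHom (E p) 1 := by
  induction hp using Submodule.span_induction with
  | mem x h =>
    obtain ⟨y, rfl⟩ := h
    rw [E_iota]
    exact isHom_single (by simp)
  | zero => intro w hw; simp at hw
  | add x y hx hy ihx ihy =>
    intro w hw
    rw [map_add] at hw
    rcases Finset.mem_union.1 (Finsupp.support_add hw) with h | h
    · exact ihx w h
    · exact ihy w h
  | smul a x hx ihx =>
    intro w hw
    rw [map_smul] at hw
    exact ihx w (Finsupp.support_smul hw)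

theorem isHom_pow {n : ℕ} {p : FreeAlgebra k α}
    (hp : p ∈ Submodule.span k (Set.range (FreeAlgebra.ι k : α → FreeAlgebra k α)) ^ n) :
    IsHom (E p) n := by
  refine Submodule.pow_induction_on_left' _
    (C := fun n x _ => IsHom
      ((FreeAlgebra.equivMonoidAlgebraFreeMonoid : FreeAlgebra k α ≃ₐ[k]
        MonoidAlgebra k (FreeMonoid α)) x) n) ?_ ?_ ?_ hp
  case _ =>
    intro r
    intro w hw
    rw [AlgEquiv.commutes] at hw
    have : (algebraMap k (MonoidAlgebra k (FreeMonoid α))) r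
        = MonoidAlgebra.single 1 r := rfl
    rw [this] at hw
    have := Finsupp.support_single_subset hw
    simp only [Finset.mem_singleton] at this
    subst this
    rfl
  case _ =>
    intro x y i hx hy ihx ihy
    intro w hw
    rw [map_add] at hw
    rcases Finset.mem_union.1 (Finsupp.support_add hw) with h | h
    · exact ihx w h
    · exact ihy w h
  case _ =>
    intro m hm i x hx ihx
    have := isHom_mul (isHom_gens hm) ihx
    rw [← map_mul] at this
    rw [Nat.add_comm] at this
    exact this

end Hom


/-! ### Endgame word combinatorics -/

theorem endgame {α : Type*} [LinearOrder α] {y1 y2 x0 : α} {w u : List α} (hy : y1 ≠ y2)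
    (d1 : y1 :: w = x0 :: u ∨ y1 :: w = u ++ [x0])
    (d2 : w ++ [y2] = x0 :: u ∨ w ++ [y2] = u ++ [x0]) : False := by
  rcases d1 with h1 | h1 <;> rcases d2 with h2 | h2
  · exact hy (rotEq w (h2.trans h1.symm)).symm
  · obtain ⟨rfl, rfl⟩ : y1 = x0 ∧ w = u := by
      simpa using h1
    obtain ⟨-, h⟩ := List.append_inj h2 rfl
    simp only [List.cons.injEq, and_true] at h
    exact hy h.symm
  · have hc : w ++ [y2, x0] = x0 :: y1 :: w := by
      have h3 : (w ++ [y2]) ++ [x0] = (x0 :: u) ++ [x0] := by rw [h2]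
      rw [List.append_assoc] at h3
      simpa [← h1] using h3
    rcases chainEq w hc with ⟨h4, h5⟩ | ⟨h4, -⟩
    · exact hy (h4.trans h5).symm
    · exact hy h4.symm
  · exact hy (rotEq w (h2.trans h1.symm)).symm


theorem stmt14 (k : Type) [Field k] [IsAlgClosed k] (s m : ℕ) (hs : 2 < s)
    (f f' : FreeAlgebra k (Fin m ⊕ Fin 2))
    (hf : f ∈ faGens k (Fin m ⊕ Fin 2) ^ (s - 1))
    (hf' : f' ∈ faGens k (Fin m ⊕ Fin 2) ^ (s - 1))
    (g : FreeAlgebra k (Fin m ⊕ Fin 2)) (hg : g ∈ faGens k (Fin m ⊕ Fin 2))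
    (hli : LinearIndependent k
      ![FreeAlgebra.ι k (Sum.inr 0 : Fin m ⊕ Fin 2) * f',
        f' * FreeAlgebra.ι k (Sum.inr 1 : Fin m ⊕ Fin 2)]) :
    Submodule.span k {g * f, f * g} ≠
      Submodule.span k
        {FreeAlgebra.ι k (Sum.inr 0 : Fin m ⊕ Fin 2) * f',
         f' * FreeAlgebra.ι k (Sum.inr 1 : Fin m ⊕ Fin 2)} := by
  classical
  letI : LinearOrder (Fin m ⊕ Fin 2) :=
    LinearOrder.lift' finSumFinEquiv finSumFinEquiv.injective
  intro hEq
  set y1 : Fin m ⊕ Fin 2 := Sum.inr 0 with hy1def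
  set y2 : Fin m ⊕ Fin 2 := Sum.inr 1 with hy2def
  have hy : y1 ≠ y2 := by
    intro h
    exact (by decide : ((0 : Fin 2) ≠ 1)) (Sum.inr.inj h)
  set E := (FreeAlgebra.equivMonoidAlgebraFreeMonoid :
    FreeAlgebra k (Fin m ⊕ Fin 2) ≃ₐ[k]
      MonoidAlgebra k (FreeMonoid (Fin m ⊕ Fin 2))) with hEdef
  have hEi : ∀ x : Fin m ⊕ Fin 2,
      E (FreeAlgebra.ι k x) = MonoidAlgebra.single (FreeMonoid.of x) (1 : k) :=
    fun x => E_iota x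
  -- facts from linear independence
  have hpair : ∀ a b : k,
      a • (FreeAlgebra.ι k y1 * f') + b • (f' * FreeAlgebra.ι k y2) = 0 →
        a = 0 ∧ b = 0 := LinearIndependent.pair_iff.mp hli
  have hp₁ : FreeAlgebra.ι k y1 * f' ≠ 0 := by
    intro h
    obtain ⟨h1, -⟩ := hpair 1 0 (by rw [h]; simp)
    exact one_ne_zero h1
  -- memberships
  have hm₁ : FreeAlgebra.ι k y1 * f' ∈ Submodule.span k {g * f, f * g} := by
    rw [hEq]
    exact Submodule.subset_span (by simp)
  have hm₂ : f' * FreeAlgebra.ι k y2 ∈ Submodule.span k {g * f, f * g} := by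
    rw [hEq]
    exact Submodule.subset_span (by simp)
  obtain ⟨a₁, b₁, h1⟩ := Submodule.mem_span_pair.1 hm₁
  obtain ⟨a₂, b₂, h2⟩ := Submodule.mem_span_pair.1 hm₂
  -- objects in the monoid algebra
  set G := E g with hGdef
  set F := E f with hFdef
  set F' := E f' with hF'def
  set S1 := MonoidAlgebra.single (FreeMonoid.of y1) (1 : k) with hS1def
  set S2 := MonoidAlgebra.single (FreeMonoid.of y2) (1 : k) with hS2def
  have hS10 : S1 ≠ 0 := fun h => one_ne_zero (MonoidAlgebra.single_eq_zero.1 h)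
  have hS20 : S2 ≠ 0 := fun h => one_ne_zero (MonoidAlgebra.single_eq_zero.1 h)
  have hisG : IsHom G 1 := isHom_gens hg
  have hisF : IsHom F (s - 1) := isHom_pow hf
  have hisF' : IsHom F' (s - 1) := isHom_pow hf'
  have hisS1 : IsHom S1 1 := isHom_single (by simp)
  have hisS2 : IsHom S2 1 := isHom_single (by simp)
  have hE1 : E (FreeAlgebra.ι k y1 * f') = S1 * F' := by
    rw [map_mul, hEi]
  have hE2 : E (f' * FreeAlgebra.ι k y2) = F' * S2 := by
    rw [map_mul, hEi]
  have H1 : a₁ • (G * F) + b₁ • (F * G) = S1 * F' := by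
    have hh := congrArg E h1
    simpa only [map_add, map_smul, map_mul, hE1] using hh
  have H2 : a₂ • (G * F) + b₂ • (F * G) = F' * S2 := by
    have hh := congrArg E h2
    simpa only [map_add, map_smul, map_mul, hE2] using hh
  have hEp₁0 : S1 * F' ≠ 0 := by
    rw [← hE1]
    intro hc
    exact hp₁ (E.injective (by rw [hc, map_zero]))
  have hF'0 : F' ≠ 0 := by
    intro h
    exact hEp₁0 (by rw [h, mul_zero])
  -- g·f and f·g have different images
  have hGF_ne : G * F ≠ F * G := by
    intro hc
    have e1 : (a₁ + b₁) • (G * F) = S1 * F' := by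
      rw [add_smul, show b₁ • (G * F) = b₁ • (F * G) from by rw [hc]]
      exact H1
    have e2 : (a₂ + b₂) • (G * F) = F' * S2 := by
      rw [add_smul, show b₂ • (G * F) = b₂ • (F * G) from by rw [hc]]
      exact H2
    have key : (a₂ + b₂) • (FreeAlgebra.ι k y1 * f')
        + (-(a₁ + b₁)) • (f' * FreeAlgebra.ι k y2) = 0 := by
      apply E.injective
      rw [map_add, map_smul, map_smul, map_zero, hE1, hE2, ← e1, ← e2,
        smul_smul, smul_smul, ← add_smul]
      convert zero_smul k (G * F) using 2
      ring
    obtain ⟨hz1, hz2⟩ := hpair _ _ key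
    have hab : a₁ + b₁ = 0 := neg_eq_zero.1 hz2
    rw [hab, zero_smul] at e1
    exact hEp₁0 e1.symm
  have hG0 : G ≠ 0 := by
    intro h
    exact hGF_ne (by rw [h, zero_mul, mul_zero])
  have hF0 : F ≠ 0 := by
    intro h
    exact hGF_ne (by rw [h, zero_mul, mul_zero])
  -- top and bottom letters of G
  obtain ⟨tG, htG⟩ := List.length_eq_one_iff.1 (hisG _ (topw_mem hG0))
  have htopG : topw G = FreeMonoid.of tG :=
    FreeMonoid.toList.injective (by rw [htG, FreeMonoid.toList_of])
  obtain ⟨bG, hbG⟩ := List.length_eq_one_iff.1 (hisG _ (botw_mem hG0))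
  have hbotG : botw G = FreeMonoid.of bG :=
    FreeMonoid.toList.injective (by rw [hbG, FreeMonoid.toList_of])
  have hlenu : (FreeMonoid.toList (topw F)).length = s - 1 := hisF _ (topw_mem hF0)
  have hlenv : (FreeMonoid.toList (botw F)).length = s - 1 := hisF _ (botw_mem hF0)
  have hlenw' : (FreeMonoid.toList (topw F')).length = s - 1 := hisF' _ (topw_mem hF'0)
  have hlenw'' : (FreeMonoid.toList (botw F')).length = s - 1 := hisF' _ (botw_mem hF'0)
  -- the monomial collapse
  have collapse : FreeMonoid.of tG * topw F = topw F * FreeMonoid.of tG →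
      FreeMonoid.of bG * botw F = botw F * FreeMonoid.of bG → tG = bG → False := by
    intro hdeg hdeg' hcoll
    have hsuppG : ∀ w ∈ G.coeff.support, w = FreeMonoid.of tG := by
      intro w hw
      refine le_antisymm (htopG ▸ le_topw hw) ?_
      have : botw G ≤ w := botw_le hw
      rwa [hbotG, ← hcoll] at this
    have hGsingle : G = MonoidAlgebra.single (FreeMonoid.of tG) (G (FreeMonoid.of tG)) :=
      MonoidAlgebra.coeff_injective <| Finsupp.support_subset_singleton.1 (fun w hw => Finset.mem_singleton.2 (hsuppG w hw))
    have hu : FreeMonoid.toList (topw F)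
        = List.replicate (FreeMonoid.toList (topw F)).length tG := by
      apply selfRot
      have := congrArg FreeMonoid.toList hdeg
      simpa [FreeMonoid.toList_mul, FreeMonoid.toList_of] using this
    have hv : FreeMonoid.toList (botw F)
        = List.replicate (FreeMonoid.toList (botw F)).length bG := by
      apply selfRot
      have := congrArg FreeMonoid.toList hdeg'
      simpa [FreeMonoid.toList_mul, FreeMonoid.toList_of] using this
    have huv : topw F = botw F := by
      apply FreeMonoid.toList.injective
      rw [hu, hv, hlenu, hlenv, hcoll]
    have hsuppF : ∀ w ∈ F.coeff.support, w = topw F := by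
      intro w hw
      exact le_antisymm (le_topw hw) (huv ▸ botw_le hw)
    have hFsingle : F = MonoidAlgebra.single (topw F) (F (topw F)) :=
      MonoidAlgebra.coeff_injective <| Finsupp.support_subset_singleton.1 (fun w hw => Finset.mem_singleton.2 (hsuppF w hw))
    apply hGF_ne
    rw [hGsingle, hFsingle, MonoidAlgebra.single_mul_single,
      MonoidAlgebra.single_mul_single, hdeg, mul_comm]
  -- products are nonzero, and their extreme words
  have hGFmul := topw_mul hG0 hF0 hisG hisF
  have hFGmul := topw_mul hF0 hG0 hisF hisG
  have hGFmulb := botw_mul hG0 hF0 hisG hisF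
  have hFGmulb := botw_mul hF0 hG0 hisF hisG
  have htop1 : topw (S1 * F') = FreeMonoid.of y1 * topw F' := by
    rw [(topw_mul hS10 hF'0 hisS1 hisF').2, hS1def, topw_single one_ne_zero]
  have htop2 : topw (F' * S2) = topw F' * FreeMonoid.of y2 := by
    rw [(topw_mul hF'0 hS20 hisF' hisS2).2, hS2def, topw_single one_ne_zero]
  have hbot1 : botw (S1 * F') = FreeMonoid.of y1 * botw F' := by
    rw [(botw_mul hS10 hF'0 hisS1 hisF').2, hS1def, botw_single one_ne_zero]
  have hbot2 : botw (F' * S2) = botw F' * FreeMonoid.of y2 := by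
    rw [(botw_mul hF'0 hS20 hisF' hisS2).2, hS2def, botw_single one_ne_zero]
  have hEp₂0 : F' * S2 ≠ 0 := (topw_mul hF'0 hS20 hisF' hisS2).1
  have hH10 : a₁ • (G * F) + b₁ • (F * G) ≠ 0 := by rw [H1]; exact hEp₁0
  have hH20 : a₂ • (G * F) + b₂ • (F * G) ≠ 0 := by rw [H2]; exact hEp₂0
  by_cases hdeg : FreeMonoid.of tG * topw F = topw F * FreeMonoid.of tG
  · by_cases hdeg' : FreeMonoid.of bG * botw F = botw F * FreeMonoid.of bG
    · -- doubly degenerate case : coefficient computations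
      have hGtG : G (FreeMonoid.of tG) ≠ 0 := by rw [← htopG]; exact topw_coeff hG0
      have hGbG : G (FreeMonoid.of bG) ≠ 0 := by rw [← hbotG]; exact botw_coeff hG0
      have hFu : F (topw F) ≠ 0 := topw_coeff hF0
      have hFv : F (botw F) ≠ 0 := botw_coeff hF0
      have hcT : (G * F) (FreeMonoid.of tG * topw F)
          = G (FreeMonoid.of tG) * F (topw F) :=
        coeff_mul_hom hisG hisF _ _ (by simp) hlenu
      have hcT' : (F * G) (FreeMonoid.of tG * topw F)
          = F (topw F) * G (FreeMonoid.of tG) := by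
        rw [hdeg]; exact coeff_mul_hom hisF hisG _ _ hlenu (by simp)
      have hcB : (G * F) (FreeMonoid.of bG * botw F)
          = G (FreeMonoid.of bG) * F (botw F) :=
        coeff_mul_hom hisG hisF _ _ (by simp) hlenv
      have hcB' : (F * G) (FreeMonoid.of bG * botw F)
          = F (botw F) * G (FreeMonoid.of bG) := by
        rw [hdeg']; exact coeff_mul_hom hisF hisG _ _ hlenv (by simp)
      have hS1T : (S1 * F') (FreeMonoid.of tG * topw F)
          = S1 (FreeMonoid.of tG) * F' (topw F) :=
        coeff_mul_hom hisS1 hisF' _ _ (by simp) hlenu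
      have hS1B : (S1 * F') (FreeMonoid.of bG * botw F)
          = S1 (FreeMonoid.of bG) * F' (botw F) :=
        coeff_mul_hom hisS1 hisF' _ _ (by simp) hlenv
      have hS2T : (F' * S2) (FreeMonoid.of tG * topw F)
          = F' (topw F) * S2 (FreeMonoid.of tG) := by
        rw [hdeg]; exact coeff_mul_hom hisF' hisS2 _ _ hlenu (by simp)
      have hS2B : (F' * S2) (FreeMonoid.of bG * botw F)
          = F' (botw F) * S2 (FreeMonoid.of bG) := by
        rw [hdeg']; exact coeff_mul_hom hisF' hisS2 _ _ hlenv (by simp)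
      have E1 : a₁ * ((G * F) (FreeMonoid.of tG * topw F))
          + b₁ * ((F * G) (FreeMonoid.of tG * topw F))
          = (S1 * F') (FreeMonoid.of tG * topw F) := by
        rw [← combo_apply, H1]
      have E2 : a₁ * ((G * F) (FreeMonoid.of bG * botw F))
          + b₁ * ((F * G) (FreeMonoid.of bG * botw F))
          = (S1 * F') (FreeMonoid.of bG * botw F) := by
        rw [← combo_apply, H1]
      have E3 : a₂ * ((G * F) (FreeMonoid.of tG * topw F))
          + b₂ * ((F * G) (FreeMonoid.of tG * topw F))
          = (F' * S2) (FreeMonoid.of tG * topw F) := by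
        rw [← combo_apply, H2]
      have E4 : a₂ * ((G * F) (FreeMonoid.of bG * botw F))
          + b₂ * ((F * G) (FreeMonoid.of bG * botw F))
          = (F' * S2) (FreeMonoid.of bG * botw F) := by
        rw [← combo_apply, H2]
      rw [hcT, hcT', hS1T] at E1
      rw [hcB, hcB', hS1B] at E2
      rw [hcT, hcT', hS2T] at E3
      rw [hcB, hcB', hS2B] at E4
      by_cases hs1 : a₁ + b₁ = 0
      · by_cases hs2 : a₂ + b₂ = 0
        · have hb₁ : b₁ = -a₁ := by linear_combination hs1
          have hb₂ : b₂ = -a₂ := by linear_combination hs2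
          have key : a₂ • (FreeAlgebra.ι k y1 * f')
              + (-a₁) • (f' * FreeAlgebra.ι k y2) = 0 := by
            apply E.injective
            rw [map_add, map_smul, map_smul, map_zero, hE1, hE2, ← H1, ← H2, hb₁, hb₂]
            module
          obtain ⟨hz1, hz2⟩ := hpair _ _ key
          have ha₁ : a₁ = 0 := neg_eq_zero.1 hz2
          rw [hb₁, ha₁, neg_zero, zero_smul, zero_smul, add_zero] at H1
          exact hEp₁0 H1.symm
        · have hprod : a₂ * (G (FreeMonoid.of tG) * F (topw F))
              + b₂ * (F (topw F) * G (FreeMonoid.of tG)) ≠ 0 := by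
            have hrw : a₂ * (G (FreeMonoid.of tG) * F (topw F))
                + b₂ * (F (topw F) * G (FreeMonoid.of tG))
                = (a₂ + b₂) * (G (FreeMonoid.of tG) * F (topw F)) := by ring
            rw [hrw]
            exact mul_ne_zero hs2 (mul_ne_zero hGtG hFu)
          have hprodB : a₂ * (G (FreeMonoid.of bG) * F (botw F))
              + b₂ * (F (botw F) * G (FreeMonoid.of bG)) ≠ 0 := by
            have hrw : a₂ * (G (FreeMonoid.of bG) * F (botw F))
                + b₂ * (F (botw F) * G (FreeMonoid.of bG))
                = (a₂ + b₂) * (G (FreeMonoid.of bG) * F (botw F)) := by ring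
            rw [hrw]
            exact mul_ne_zero hs2 (mul_ne_zero hGbG hFv)
          have hS2tG : S2 (FreeMonoid.of tG) ≠ 0 := by
            intro h
            rw [E3, h, mul_zero] at hprod
            exact hprod rfl
          have hS2bG : S2 (FreeMonoid.of bG) ≠ 0 := by
            intro h
            rw [E4, h, mul_zero] at hprodB
            exact hprodB rfl
          have htG : FreeMonoid.of y2 = FreeMonoid.of tG := by
            by_contra hne'
            exact hS2tG (Finsupp.single_eq_of_ne' hne')
          have hbG2 : FreeMonoid.of y2 = FreeMonoid.of bG := by
            by_contra hne'
            exact hS2bG (Finsupp.single_eq_of_ne' hne')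
          exact collapse hdeg hdeg'
            (FreeMonoid.of_injective (htG.symm.trans hbG2))
      · have hprod : a₁ * (G (FreeMonoid.of tG) * F (topw F))
            + b₁ * (F (topw F) * G (FreeMonoid.of tG)) ≠ 0 := by
          have hrw : a₁ * (G (FreeMonoid.of tG) * F (topw F))
              + b₁ * (F (topw F) * G (FreeMonoid.of tG))
              = (a₁ + b₁) * (G (FreeMonoid.of tG) * F (topw F)) := by ring
          rw [hrw]
          exact mul_ne_zero hs1 (mul_ne_zero hGtG hFu)
        have hprodB : a₁ * (G (FreeMonoid.of bG) * F (botw F))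
            + b₁ * (F (botw F) * G (FreeMonoid.of bG)) ≠ 0 := by
          have hrw : a₁ * (G (FreeMonoid.of bG) * F (botw F))
              + b₁ * (F (botw F) * G (FreeMonoid.of bG))
              = (a₁ + b₁) * (G (FreeMonoid.of bG) * F (botw F)) := by ring
          rw [hrw]
          exact mul_ne_zero hs1 (mul_ne_zero hGbG hFv)
        have hS1tG : S1 (FreeMonoid.of tG) ≠ 0 := by
          intro h
          rw [E1, h, zero_mul] at hprod
          exact hprod rfl
        have hS1bG : S1 (FreeMonoid.of bG) ≠ 0 := by
          intro h
          rw [E2, h, zero_mul] at hprodB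
          exact hprodB rfl
        have htG : FreeMonoid.of y1 = FreeMonoid.of tG := by
          by_contra hne'
          exact hS1tG (Finsupp.single_eq_of_ne' hne')
        have hbG2 : FreeMonoid.of y1 = FreeMonoid.of bG := by
          by_contra hne'
          exact hS1bG (Finsupp.single_eq_of_ne' hne')
        exact collapse hdeg hdeg'
          (FreeMonoid.of_injective (htG.symm.trans hbG2))
    · -- bottom words are non-degenerate
      have hne : botw (G * F) ≠ botw (F * G) := by
        rw [hGFmulb.2, hFGmulb.2, hbotG]
        exact hdeg'
      have d1 := botw_combo hGFmulb.1 hFGmulb.1 hne hH10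
      have d2 := botw_combo hGFmulb.1 hFGmulb.1 hne hH20
      rw [H1, hbot1, hGFmulb.2, hFGmulb.2, hbotG] at d1
      rw [H2, hbot2, hGFmulb.2, hFGmulb.2, hbotG] at d2
      have D1 : y1 :: FreeMonoid.toList (botw F')
          = bG :: FreeMonoid.toList (botw F)
          ∨ y1 :: FreeMonoid.toList (botw F')
          = FreeMonoid.toList (botw F) ++ [bG] := by
        rcases d1 with h | h
        · left
          have := congrArg FreeMonoid.toList h
          simpa [FreeMonoid.toList_mul, FreeMonoid.toList_of] using this
        · right
          have := congrArg FreeMonoid.toList h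
          simpa [FreeMonoid.toList_mul, FreeMonoid.toList_of] using this
      have D2 : FreeMonoid.toList (botw F') ++ [y2]
          = bG :: FreeMonoid.toList (botw F)
          ∨ FreeMonoid.toList (botw F') ++ [y2]
          = FreeMonoid.toList (botw F) ++ [bG] := by
        rcases d2 with h | h
        · left
          have := congrArg FreeMonoid.toList h
          simpa [FreeMonoid.toList_mul, FreeMonoid.toList_of] using this
        · right
          have := congrArg FreeMonoid.toList h
          simpa [FreeMonoid.toList_mul, FreeMonoid.toList_of] using this
      exact endgame hy D1 D2
  · -- top words are non-degenerate
    have hne : topw (G * F) ≠ topw (F * G) := by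
      rw [hGFmul.2, hFGmul.2, htopG]
      exact hdeg
    have d1 := topw_combo hGFmul.1 hFGmul.1 hne hH10
    have d2 := topw_combo hGFmul.1 hFGmul.1 hne hH20
    rw [H1, htop1, hGFmul.2, hFGmul.2, htopG] at d1
    rw [H2, htop2, hGFmul.2, hFGmul.2, htopG] at d2
    have D1 : y1 :: FreeMonoid.toList (topw F')
        = tG :: FreeMonoid.toList (topw F)
        ∨ y1 :: FreeMonoid.toList (topw F')
        = FreeMonoid.toList (topw F) ++ [tG] := by
      rcases d1 with h | h
      · left
        have := congrArg FreeMonoid.toList h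
        simpa [FreeMonoid.toList_mul, FreeMonoid.toList_of] using this
      · right
        have := congrArg FreeMonoid.toList h
        simpa [FreeMonoid.toList_mul, FreeMonoid.toList_of] using this
    have D2 : FreeMonoid.toList (topw F') ++ [y2]
        = tG :: FreeMonoid.toList (topw F)
        ∨ FreeMonoid.toList (topw F') ++ [y2]
        = FreeMonoid.toList (topw F) ++ [tG] := by
      rcases d2 with h | h
      · left
        have := congrArg FreeMonoid.toList h
        simpa [FreeMonoid.toList_mul, FreeMonoid.toList_of] using this
      · right
        have := congrArg FreeMonoid.toList h
        simpa [FreeMonoid.toList_mul, FreeMonoid.toList_of] using this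
    exact endgame hy D1 D2

end
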